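/- Under a one-step partial replacement from a uniform size-n sample s to a sample s' (discarding a uniform size-a subset of s and adding a uniform subset of size n' - (n-a) of the complement), the conditional probability P(k ∈ s' | k ∈ s) equals (1 - n/N)λ + n'/N, where λ = (1 - a/n - n'/N)/(1 - n/N), provided n < N. -/

import Mathlib

open Finset

private lemma choose_row_identity (n a : ℕ) (ha : a ≤ n) :
    n * (n - 1).choose a = (n - a) * n.choose a := by
  rcases eq_or_lt_of_le ha with rfl | hlt
  · rcases Nat.eq_zero_or_pos a with rfl | hp
    · simp
    · rw [Nat.choose_eq_zero_of_lt (by omega), Nat.sub_self]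
      ring
  · have h1 : a ≤ n - 1 := by omega
    apply Nat.eq_of_mul_eq_mul_right
      (show 0 < Nat.factorial a * Nat.factorial (n - 1 - a) by positivity)
    have e1 : (n - 1).choose a * Nat.factorial a * Nat.factorial (n - 1 - a) =
        Nat.factorial (n - 1) := Nat.choose_mul_factorial_mul_factorial h1
    have e2 : n.choose a * Nat.factorial a * Nat.factorial (n - a) =
        Nat.factorial n := Nat.choose_mul_factorial_mul_factorial ha
    have e3 : Nat.factorial (n - a) = (n - a) * Nat.factorial (n - 1 - a) := by
      have h : n - a = (n - 1 - a) + 1 := by omega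
      rw [h, Nat.factorial_succ, ← h]
    have e4 : Nat.factorial n = n * Nat.factorial (n - 1) := by
      have h : Nat.factorial ((n - 1) + 1) = ((n - 1) + 1) * Nat.factorial (n - 1) :=
        Nat.factorial_succ _
      rwa [show (n - 1) + 1 = n from by omega] at h
    calc n * (n - 1).choose a * (Nat.factorial a * Nat.factorial (n - 1 - a))
        = n * ((n - 1).choose a * Nat.factorial a * Nat.factorial (n - 1 - a)) := by ring
      _ = n * Nat.factorial (n - 1) := by rw [e1]
      _ = Nat.factorial n := e4.symm
      _ = n.choose a * Nat.factorial a * Nat.factorial (n - a) := e2.symm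
      _ = n.choose a * Nat.factorial a * ((n - a) * Nat.factorial (n - 1 - a)) := by rw [e3]
      _ = (n - a) * n.choose a * (Nat.factorial a * Nat.factorial (n - 1 - a)) := by ring

private lemma count_aux (N n a m : ℕ) (k : Fin N) (c : ℕ)
    (Q : Finset (Fin N) → Finset (Fin N) → Prop) [∀ s D, Decidable (Q s D)]
    (hQ : ∀ s : Finset (Fin N), s.card = n → k ∈ s →
      (Finset.univ.filter (fun D => D ⊆ s ∧ D.card = a ∧ Q s D)).card = c) :
    (Finset.univ.filter (fun p : Finset (Fin N) × Finset (Fin N) × Finset (Fin N) =>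
        ((p.1.card = n ∧ p.2.1 ⊆ p.1 ∧ p.2.1.card = a ∧ p.2.2 ⊆ p.1ᶜ ∧
          p.2.2.card = m) ∧ k ∈ p.1) ∧ Q p.1 p.2.1)).card
      = (Finset.univ.filter (fun s : Finset (Fin N) => s.card = n ∧ k ∈ s)).card *
          (c * (N - n).choose m) := by
  set S1 := Finset.univ.filter (fun s : Finset (Fin N) => s.card = n ∧ k ∈ s) with hS1
  rw [Finset.card_eq_sum_card_fiberwise (f := fun p => p.1) (t := S1)
    (by
      intro p hp
      simp only [hS1, Finset.mem_coe, mem_filter, mem_univ, true_and] at hp ⊢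
      exact ⟨hp.1.1.1, hp.1.2⟩)]
  have hstep : ∀ s ∈ S1,
      ((Finset.univ.filter (fun p : Finset (Fin N) × Finset (Fin N) × Finset (Fin N) =>
        ((p.1.card = n ∧ p.2.1 ⊆ p.1 ∧ p.2.1.card = a ∧ p.2.2 ⊆ p.1ᶜ ∧
          p.2.2.card = m) ∧ k ∈ p.1) ∧ Q p.1 p.2.1)).filter
          (fun p => p.1 = s)).card = c * (N - n).choose m := by
    intro s hs
    simp only [hS1, mem_filter, mem_univ, true_and] at hs
    obtain ⟨hcard, hks⟩ := hs
    have hcompl : (sᶜ : Finset (Fin N)).card = N - n := by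
      rw [Finset.card_compl, hcard, Fintype.card_fin]
    have hbij : ((Finset.univ.filter (fun p : Finset (Fin N) × Finset (Fin N) × Finset (Fin N) =>
        ((p.1.card = n ∧ p.2.1 ⊆ p.1 ∧ p.2.1.card = a ∧ p.2.2 ⊆ p.1ᶜ ∧
          p.2.2.card = m) ∧ k ∈ p.1) ∧ Q p.1 p.2.1)).filter
          (fun p => p.1 = s)) =
        (((Finset.univ.filter (fun D : Finset (Fin N) => D ⊆ s ∧ D.card = a ∧ Q s D)) ×ˢ
          ((sᶜ : Finset (Fin N)).powersetCard m)).image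
            (fun q => (s, q.1, q.2))) := by
      ext ⟨s1, D, A⟩
      constructor
      · intro hp
        rw [Finset.mem_filter] at hp
        obtain ⟨hp1, heq⟩ := hp
        rw [Finset.mem_filter] at hp1
        obtain ⟨-, ⟨⟨hc1, hD1, hD2, hA1, hA2⟩, hk⟩, hq⟩ := hp1
        simp only at heq hD1 hD2 hA1 hA2 hq
        subst heq
        apply Finset.mem_image.2
        refine ⟨(D, A), ?_, rfl⟩
        rw [Finset.mem_product]
        exact ⟨Finset.mem_filter.2 ⟨Finset.mem_univ _, hD1, hD2, hq⟩,
          Finset.mem_powersetCard.2 ⟨hA1, hA2⟩⟩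
      · intro hp
        obtain ⟨⟨D0, A0⟩, hq, heq⟩ := Finset.mem_image.1 hp
        rw [Finset.mem_product] at hq
        obtain ⟨hqD, hqA⟩ := hq
        obtain ⟨-, hD1, hD2, hq'⟩ := Finset.mem_filter.1 hqD
        obtain ⟨hA1, hA2⟩ := Finset.mem_powersetCard.1 hqA
        have hE : s = s1 ∧ D0 = D ∧ A0 = A := by
          simpa [Prod.ext_iff] using heq
        obtain ⟨h1, h2, h3⟩ := hE
        subst h1
        subst h2
        subst h3
        rw [Finset.mem_filter]
        refine ⟨Finset.mem_filter.2 ⟨Finset.mem_univ _, ⟨⟨hcard, hD1, hD2, hA1, hA2⟩, hks⟩, hq'⟩, rfl⟩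
    have hinj : Function.Injective
        (fun q : Finset (Fin N) × Finset (Fin N) => ((s, q.1, q.2) :
          Finset (Fin N) × Finset (Fin N) × Finset (Fin N))) := by
      rintro ⟨a1, a2⟩ ⟨b1, b2⟩ h
      simpa [Prod.ext_iff] using h
    rw [hbij, Finset.card_image_of_injective _ hinj, Finset.card_product,
      Finset.card_powersetCard, hcompl, hQ s hcard hks]
  calc ∑ s ∈ S1, ((Finset.univ.filter
        (fun p : Finset (Fin N) × Finset (Fin N) × Finset (Fin N) =>
        ((p.1.card = n ∧ p.2.1 ⊆ p.1 ∧ p.2.1.card = a ∧ p.2.2 ⊆ p.1ᶜ ∧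
          p.2.2.card = m) ∧ k ∈ p.1) ∧ Q p.1 p.2.1)).filter
          (fun p => p.1 = s)).card
      = ∑ s ∈ S1, c * (N - n).choose m := Finset.sum_congr rfl hstep
    _ = S1.card * (c * (N - n).choose m) := by rw [Finset.sum_const, smul_eq_mul]

theorem partial_replacement_cond_in (N a n n' : ℕ) (ha : a ≤ n) (hn1 : 1 ≤ n)
    (hn : n < N) (hlow : n - a ≤ n') (hhigh : n' ≤ N - a) (k : Fin N)
    (T : Finset (Finset (Fin N) × Finset (Fin N) × Finset (Fin N)))
    (hT : T = Finset.univ.filter (fun p =>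
      p.1.card = n ∧ p.2.1 ⊆ p.1 ∧ p.2.1.card = a ∧
        p.2.2 ⊆ p.1ᶜ ∧ p.2.2.card = n' - (n - a))) :
    (((T.filter (fun p => k ∈ p.1 ∧ k ∈ (p.1 \ p.2.1) ∪ p.2.2)).card : ℝ) /
        ((T.filter (fun p => k ∈ p.1)).card : ℝ)) =
      (1 - (n : ℝ) / N) *
          ((1 - (a : ℝ) / n - (n' : ℝ) / N) / (1 - (n : ℝ) / N)) + (n' : ℝ) / N := by
  subst hT
  set m := n' - (n - a) with hm
  rw [Finset.filter_filter, Finset.filter_filter]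
  have hnum : (Finset.univ.filter (fun p : Finset (Fin N) × Finset (Fin N) × Finset (Fin N) =>
      (p.1.card = n ∧ p.2.1 ⊆ p.1 ∧ p.2.1.card = a ∧ p.2.2 ⊆ p.1ᶜ ∧ p.2.2.card = m) ∧
        k ∈ p.1 ∧ k ∈ (p.1 \ p.2.1) ∪ p.2.2)) =
      Finset.univ.filter (fun p : Finset (Fin N) × Finset (Fin N) × Finset (Fin N) =>
      ((p.1.card = n ∧ p.2.1 ⊆ p.1 ∧ p.2.1.card = a ∧ p.2.2 ⊆ p.1ᶜ ∧ p.2.2.card = m) ∧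
        k ∈ p.1) ∧ k ∉ p.2.1) := by
    apply Finset.filter_congr
    intro p _
    constructor
    · rintro ⟨hc, hks, hku⟩
      refine ⟨⟨hc, hks⟩, ?_⟩
      rcases Finset.mem_union.1 hku with h | h
      · exact (Finset.mem_sdiff.1 h).2
      · exact absurd (Finset.mem_compl.1 (hc.2.2.2.1 h)) (by simp [hks])
    · rintro ⟨⟨hc, hks⟩, hkD⟩
      exact ⟨hc, hks, Finset.mem_union_left _ (Finset.mem_sdiff.2 ⟨hks, hkD⟩)⟩
  have hden : (Finset.univ.filter (fun p : Finset (Fin N) × Finset (Fin N) × Finset (Fin N) =>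
      (p.1.card = n ∧ p.2.1 ⊆ p.1 ∧ p.2.1.card = a ∧ p.2.2 ⊆ p.1ᶜ ∧ p.2.2.card = m) ∧
        k ∈ p.1)) =
      Finset.univ.filter (fun p : Finset (Fin N) × Finset (Fin N) × Finset (Fin N) =>
      ((p.1.card = n ∧ p.2.1 ⊆ p.1 ∧ p.2.1.card = a ∧ p.2.2 ⊆ p.1ᶜ ∧ p.2.2.card = m) ∧
        k ∈ p.1) ∧ True) := by
    simp
  rw [hnum, hden]
  rw [count_aux N n a m k ((n - 1).choose a) (fun _ D => k ∉ D)
    (by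
      intro s hcard hks
      have h : Finset.univ.filter (fun D : Finset (Fin N) => D ⊆ s ∧ D.card = a ∧ k ∉ D)
          = (s.erase k).powersetCard a := by
        ext D
        simp only [mem_filter, mem_univ, true_and, Finset.mem_powersetCard,
          Finset.subset_erase]
        tauto
      rw [h, Finset.card_powersetCard, Finset.card_erase_of_mem hks, hcard])]
  rw [count_aux N n a m k (n.choose a) (fun _ _ => True)
    (by
      intro s hcard _
      have h : Finset.univ.filter (fun D : Finset (Fin N) => D ⊆ s ∧ D.card = a ∧ True)
          = s.powersetCard a := by
        ext D
        simp [Finset.mem_powersetCard]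
      rw [h, Finset.card_powersetCard, hcard])]
  -- nonzeroness facts
  have hCpos : 0 < (Finset.univ.filter (fun s : Finset (Fin N) => s.card = n ∧ k ∈ s)).card := by
    rw [Finset.card_pos]
    obtain ⟨t, hsub, htsub, htcard⟩ := Finset.exists_subsuperset_card_eq
      (Finset.subset_univ {k}) (by simpa using hn1)
      (by simp only [Finset.card_univ, Fintype.card_fin]; omega)
    refine ⟨t, ?_⟩
    simp only [mem_filter, mem_univ, true_and]
    exact ⟨htcard, hsub (Finset.mem_singleton_self k)⟩
  have hm' : m ≤ N - n := by omega
  have hcApos : 0 < (N - n).choose m := Nat.choose_pos hm'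
  have hc0pos : 0 < n.choose a := Nat.choose_pos ha
  have key : (n : ℝ) * ((n - 1).choose a : ℝ) = ((n : ℝ) - a) * (n.choose a : ℝ) := by
    have h := choose_row_identity n a ha
    have h2 : ((n * (n - 1).choose a : ℕ) : ℝ) = (((n - a) * n.choose a : ℕ) : ℝ) := by
      exact_mod_cast congrArg (Nat.cast (R := ℝ)) h
    push_cast [Nat.cast_sub ha] at h2
    linarith
  have hNpos : (0 : ℝ) < N := by
    have : 0 < N := by omega
    exact_mod_cast this
  have hnpos : (0 : ℝ) < n := by exact_mod_cast hn1
  have hfne : 1 - (n : ℝ) / N ≠ 0 := by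
    have h : (n : ℝ) / N < 1 := by
      rw [div_lt_one hNpos]
      exact_mod_cast hn
    linarith
  have hR : (1 - (n : ℝ) / N) * ((1 - (a : ℝ) / n - (n' : ℝ) / N) / (1 - (n : ℝ) / N)) =
      1 - (a : ℝ) / n - (n' : ℝ) / N := by
    rw [mul_comm, div_mul_cancel₀ _ hfne]
  rw [hR]
  have hR2 : 1 - (a : ℝ) / n - (n' : ℝ) / N + (n' : ℝ) / N = ((n : ℝ) - a) / n := by
    field_simp
    ring
  rw [hR2]
  have hCR : (0 : ℝ) <
      ((Finset.univ.filter (fun s : Finset (Fin N) => s.card = n ∧ k ∈ s)).card : ℝ) := by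
    exact_mod_cast hCpos
  have hcAR : (0 : ℝ) < ((N - n).choose m : ℝ) := by exact_mod_cast hcApos
  have hc0R : (0 : ℝ) < (n.choose a : ℝ) := by exact_mod_cast hc0pos
  push_cast
  rw [div_eq_div_iff (by positivity) hnpos.ne']
  linear_combination ((Finset.univ.filter
      (fun s : Finset (Fin N) => s.card = n ∧ k ∈ s)).card : ℝ) *
    ((N - n).choose m : ℝ) * key
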